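/- arXiv:1502.03636 — 3 statements merged into one kernel-verified Lean document; each statement's English description precedes it below -/
import Mathlib

section
/- The labelled transition system of the recursion-free calculus CLL is a τ-pure logic LTS, i.e.: (τ-purity) if p —τ→ then p —a→ holds for no a ∈ Act; (LTS1) if there is α ∈ I(p) such that every q with p —α→ q is in F, then p ∈ F; (LTS2) if there is no q with p ⇒_F| q, then p ∈ F. Moreover, if p ∈ F and τ ∈ I(p), then every q with p —τ→ q is in F. -/
open Classical

/-- Visible actions plus the invisible action τ. -/
inductive ActT (Act : Type) : Type where
  | act : Act → ActT Act
  | tau : ActT Act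

/-- Processes of the recursion-free calculus CLL. -/
inductive Proc (Act : Type) : Type where
  | nil  : Proc Act                                -- 0
  | bot  : Proc Act                                -- ⊥
  | pre  : ActT Act → Proc Act → Proc Act          -- α.t
  | ec   : Proc Act → Proc Act → Proc Act          -- t □ t
  | conj : Proc Act → Proc Act → Proc Act          -- t ∧ t
  | disj : Proc Act → Proc Act → Proc Act          -- t ∨ t
  | par  : Set Act → Proc Act → Proc Act → Proc Act -- t ∥_A t

namespace Proc

variable {Act : Type}

/-- Whether a process has a τ-transition (structural stratification used for
the negative premises of the SOS rules). -/
def hasTau : Proc Act → Prop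
  | nil => False
  | bot => False
  | pre a _ => a = ActT.tau
  | ec t₁ t₂ => hasTau t₁ ∨ hasTau t₂
  | conj t₁ t₂ => hasTau t₁ ∨ hasTau t₂
  | disj _ _ => True
  | par _ t₁ t₂ => hasTau t₁ ∨ hasTau t₂

/-- The transition relation, given by the SOS rules of CLL_R. -/
inductive Trans : Proc Act → ActT Act → Proc Act → Prop where
  | pre : Trans (pre α t) α t
  | ecL : Trans t₁ (ActT.act a) t₁' → ¬ hasTau t₂ →
      Trans (ec t₁ t₂) (ActT.act a) t₁'
  | ecR : ¬ hasTau t₁ → Trans t₂ (ActT.act a) t₂' →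
      Trans (ec t₁ t₂) (ActT.act a) t₂'
  | ecTauL : Trans t₁ ActT.tau t₁' → Trans (ec t₁ t₂) ActT.tau (ec t₁' t₂)
  | ecTauR : Trans t₂ ActT.tau t₂' → Trans (ec t₁ t₂) ActT.tau (ec t₁ t₂')
  | conjAct : Trans t₁ (ActT.act a) t₁' → Trans t₂ (ActT.act a) t₂' →
      Trans (conj t₁ t₂) (ActT.act a) (conj t₁' t₂')
  | conjTauL : Trans t₁ ActT.tau t₁' → Trans (conj t₁ t₂) ActT.tau (conj t₁' t₂)
  | conjTauR : Trans t₂ ActT.tau t₂' → Trans (conj t₁ t₂) ActT.tau (conj t₁ t₂')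
  | disjL : Trans (disj t₁ t₂) ActT.tau t₁
  | disjR : Trans (disj t₁ t₂) ActT.tau t₂
  | parTauL : Trans t₁ ActT.tau t₁' → Trans (par A t₁ t₂) ActT.tau (par A t₁' t₂)
  | parTauR : Trans t₂ ActT.tau t₂' → Trans (par A t₁ t₂) ActT.tau (par A t₁ t₂')
  | parL : a ∉ A → Trans t₁ (ActT.act a) t₁' → ¬ hasTau t₂ →
      Trans (par A t₁ t₂) (ActT.act a) (par A t₁' t₂)
  | parR : a ∉ A → ¬ hasTau t₁ → Trans t₂ (ActT.act a) t₂' →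
      Trans (par A t₁ t₂) (ActT.act a) (par A t₁ t₂')
  | parSync : a ∈ A → Trans t₁ (ActT.act a) t₁' → Trans t₂ (ActT.act a) t₂' →
      Trans (par A t₁ t₂) (ActT.act a) (par A t₁' t₂')

/-- The ready set I(p). -/
def ready (p : Proc Act) : Set (ActT Act) := {α | ∃ q, Trans p α q}

/-- p is stable if it has no τ-transition. -/
def Stable (p : Proc Act) : Prop := ∀ q, ¬ Trans p ActT.tau q

/-- The inconsistency predicate F, as the least predicate closed under the
predicative rules of CLL_R. -/
inductive Fp : Proc Act → Prop where
  | bot : Fp bot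
  | pre : Fp t → Fp (pre α t)
  | disj : Fp t₁ → Fp t₂ → Fp (disj t₁ t₂)
  | ecL : Fp t₁ → Fp (ec t₁ t₂)
  | ecR : Fp t₂ → Fp (ec t₁ t₂)
  | parL : Fp t₁ → Fp (par A t₁ t₂)
  | parR : Fp t₂ → Fp (par A t₁ t₂)
  | conjL : Fp t₁ → Fp (conj t₁ t₂)
  | conjR : Fp t₂ → Fp (conj t₁ t₂)
  | conjReady : Stable (conj t₁ t₂) → ready t₁ ≠ ready t₂ → Fp (conj t₁ t₂)
  | conjSucc : Trans (conj t₁ t₂) α s → (∀ y, Trans (conj t₁ t₂) α y → Fp y) →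
      Fp (conj t₁ t₂)
  | conjStable :
      (∀ y, Relation.ReflTransGen (fun x z => Trans x ActT.tau z) (conj t₁ t₂) y →
        Stable y → Fp y) →
      Fp (conj t₁ t₂)

/-- One τ-step with both endpoints consistent. -/
def tauStepF (p q : Proc Act) : Prop := Trans p ActT.tau q ∧ ¬ Fp p ∧ ¬ Fp q

/-- p ⇒_F| q : a sequence of τ-transitions from p to q, all states outside F,
with q stable. -/
def epsF (p q : Proc Act) : Prop :=
  Relation.ReflTransGen tauStepF p q ∧ ¬ Fp p ∧ ¬ Fp q ∧ Stable q

/-- p =a⇒_F| q. -/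
def wkF (a : Act) (p q : Proc Act) : Prop :=
  ∃ r s, Relation.ReflTransGen tauStepF p r ∧ ¬ Fp p ∧ ¬ Fp r ∧
    Trans r (ActT.act a) s ∧ ¬ Fp s ∧
    Relation.ReflTransGen tauStepF s q ∧ ¬ Fp q ∧ Stable q

/-- R is a stable ready simulation. -/
def StableRS (R : Proc Act → Proc Act → Prop) : Prop :=
  ∀ p q, R p q →
    Stable p ∧ Stable q ∧
    (¬ Fp p → ¬ Fp q) ∧
    (∀ a p', wkF a p p' → ∃ q', wkF a q q' ∧ R p' q') ∧
    (¬ Fp p → ready p = ready q)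

/-- p ⊏̃_RS q. -/
def rsLT (p q : Proc Act) : Prop := ∃ R, StableRS R ∧ R p q

/-- p ⊑_RS q. -/
def rsLE (p q : Proc Act) : Prop :=
  ∀ p', epsF p p' → ∃ q', epsF q q' ∧ rsLT p' q'

/-- p =_RS q. -/
def rsEq (p q : Proc Act) : Prop := rsLE p q ∧ rsLE q p

/-- Basic process terms T(Σ_B): no ⊥ and no ∧. -/
inductive Basic : Proc Act → Prop where
  | nil : Basic nil
  | pre : Basic t → Basic (pre α t)
  | disj : Basic t₁ → Basic t₂ → Basic (disj t₁ t₂)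
  | ec : Basic t₁ → Basic t₂ → Basic (ec t₁ t₂)
  | par : Basic t₁ → Basic t₂ → Basic (par A t₁ t₂)

/-- General external choice □ over a finite sequence (left-nested). -/
def ecList : List (Proc Act) → Proc Act
  | [] => nil
  | t :: ts => ts.foldl ec t

/-- General disjunction ⋁ over a nonempty finite sequence (left-nested). -/
def djList : List (Proc Act) → Proc Act
  | [] => bot
  | t :: ts => ts.foldl disj t

/-- □_{i<n} a_i.t_i for a sequence of prefixed terms. -/
def ecPre (l : List (Act × Proc Act)) : Proc Act :=
  ecList (l.map fun x => pre (ActT.act x.1) x.2)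

/-- The expansion term E = ((□Ω₁) □ (□Ω₂)) □ (□Ω₃). -/
noncomputable def expTerm (A : Set Act) (l₁ l₂ : List (Act × Proc Act)) : Proc Act :=
  ec (ec
      (ecList ((l₁.filter fun x => decide (x.1 ∉ A)).map
        fun x => pre (ActT.act x.1) (par A x.2 (ecPre l₂))))
      (ecList ((l₂.filter fun x => decide (x.1 ∉ A)).map
        fun x => pre (ActT.act x.1) (par A (ecPre l₁) x.2))))
    (ecList (l₁.flatMap fun x =>
      (l₂.filter fun y => decide (y.1 = x.1 ∧ x.1 ∈ A)).map
        fun y => pre (ActT.act x.1) (par A x.2 y.2)))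

/-- Normal forms NF_B. -/
inductive NFB : Proc Act → Prop where
  | mk (ls : List (List (Act × Proc Act))) (hne : ls ≠ [])
      (hnodup : ∀ l ∈ ls, (l.map Prod.fst).Nodup)
      (hsub : ∀ l ∈ ls, ∀ x ∈ l, NFB x.2) :
      NFB (djList (ls.map ecPre))

/-- NF = NF_B ∪ {⊥}. -/
def NF (p : Proc Act) : Prop := NFB p ∨ p = bot

/-- Derivability ⊢ t ≤ t' in the proof system AX_CLL. -/
inductive Deriv : Proc Act → Proc Act → Prop where
  | refl (t) : Deriv t t
  | trans : Deriv t t' → Deriv t' t'' → Deriv t t''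
  | mono_pre : Deriv t t' → Deriv (pre α t) (pre α t')
  | mono_ec : Deriv s s' → Deriv t t' → Deriv (ec s t) (ec s' t')
  | mono_conj : Deriv s s' → Deriv t t' → Deriv (conj s t) (conj s' t')
  | mono_disj : Deriv s s' → Deriv t t' → Deriv (disj s t) (disj s' t')
  | mono_par : Deriv s s' → Deriv t t' → Deriv (par A s t) (par A s' t')
  -- external choice
  | ec_comm : Deriv (ec x y) (ec y x)
  | ec_assoc₁ : Deriv (ec (ec x y) z) (ec x (ec y z))
  | ec_assoc₂ : Deriv (ec x (ec y z)) (ec (ec x y) z)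
  | ec_idem₁ : Deriv (ec x x) x
  | ec_idem₂ : Deriv x (ec x x)
  | ec_nil₁ : Deriv (ec x nil) x
  | ec_nil₂ : Deriv x (ec x nil)
  | ec_bot₁ : Deriv (ec x bot) bot
  | ec_bot₂ : Deriv bot (ec x bot)
  -- disjunction
  | disj_comm : Deriv (disj x y) (disj y x)
  | disj_assoc₁ : Deriv (disj x (disj y z)) (disj (disj x y) z)
  | disj_assoc₂ : Deriv (disj (disj x y) z) (disj x (disj y z))
  | disj_idem₁ : Deriv (disj x x) x
  | disj_idem₂ : Deriv x (disj x x)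
  | disj_bot₁ : Deriv (disj x bot) x
  | disj_bot₂ : Deriv x (disj x bot)
  | disj_le : Deriv x (disj x y)
  -- conjunction
  | conj_comm : Deriv (conj x y) (conj y x)
  | conj_idem₁ : Deriv (conj x x) x
  | conj_idem₂ : Deriv x (conj x x)
  | conj_bot₁ : Deriv (conj x bot) bot
  | conj_bot₂ : Deriv bot (conj x bot)
  -- prefixing
  | pre_bot₁ : Deriv (pre (ActT.act a) bot) bot
  | pre_bot₂ : Deriv bot (pre (ActT.act a) bot)
  | tau_pre₁ : Deriv (pre ActT.tau x) x
  | tau_pre₂ : Deriv x (pre ActT.tau x)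
  -- parallel
  | par_comm : Deriv (par A x y) (par A y x)
  | par_bot₁ : Deriv (par A x bot) bot
  | par_bot₂ : Deriv bot (par A x bot)
  -- distribution over disjunction
  | ds_ec : Deriv (ec x (disj y z)) (disj (ec x y) (ec x z))
  | ds_conj : Deriv (conj x (disj y z)) (disj (conj x y) (conj x z))
  | ds_par : Deriv (par A x (disj y z)) (disj (par A x y) (par A x z))
  | ds_pre : Basic x → Basic y →
      Deriv (pre (ActT.act a) (disj x y)) (ec (pre (ActT.act a) x) (pre (ActT.act a) y))
  -- external choice and conjunction
  | ecc1₁ (l₁ l₂ : List (Act × Proc Act)) :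
      {a | a ∈ l₁.map Prod.fst} ≠ {a | a ∈ l₂.map Prod.fst} →
      Deriv (conj (ecPre l₁) (ecPre l₂)) bot
  | ecc1₂ (l₁ l₂ : List (Act × Proc Act)) :
      {a | a ∈ l₁.map Prod.fst} ≠ {a | a ∈ l₂.map Prod.fst} →
      Deriv bot (conj (ecPre l₁) (ecPre l₂))
  | ecc2 (l : List (Act × Proc Act × Proc Act)) :
      Deriv (ecPre (l.map fun x => (x.1, conj x.2.1 x.2.2)))
            (conj (ecPre (l.map fun x => (x.1, x.2.1)))
                  (ecPre (l.map fun x => (x.1, x.2.2))))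
  | ecc3 (l : List (Act × Proc Act × Proc Act)) :
      (l.map Prod.fst).Nodup →
      Deriv (conj (ecPre (l.map fun x => (x.1, x.2.1)))
                  (ecPre (l.map fun x => (x.1, x.2.2))))
            (ecPre (l.map fun x => (x.1, conj x.2.1 x.2.2)))
  -- expansion
  | exp1 (A : Set Act) (l₁ l₂ : List (Act × Proc Act)) :
      Deriv (par A (ecPre l₁) (ecPre l₂)) (expTerm A l₁ l₂)
  | exp2 (A : Set Act) (l₁ l₂ : List (Act × Proc Act)) :
      (∀ x ∈ l₁, Basic x.2) → (∀ x ∈ l₂, Basic x.2) →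
      Deriv (expTerm A l₁ l₂) (par A (ecPre l₁) (ecPre l₂))

end Proc

namespace Proc

variable {Act : Type}

lemma hasTau_of_trans {p q : Proc Act} {α} (h : Trans p α q) (hα : α = ActT.tau) :
    hasTau p := by
  induction h <;> simp_all [hasTau]

lemma not_hasTau_of_act {p q : Proc Act} {α} {a : Act} (h : Trans p α q)
    (hα : α = ActT.act a) : ¬ hasTau p := by
  induction h <;> simp_all [hasTau]

lemma tauPure {p : Proc Act} (h : ∃ q, Trans p ActT.tau q) (a : Act) (q : Proc Act) :
    ¬ Trans p (ActT.act a) q := by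
  obtain ⟨r, hr⟩ := h
  intro hq
  exact not_hasTau_of_act hq rfl (hasTau_of_trans hr rfl)

lemma Fp_ec_inv {t₁ t₂ : Proc Act} (h : Fp (ec t₁ t₂)) : Fp t₁ ∨ Fp t₂ := by
  cases h with
  | ecL h => exact Or.inl h
  | ecR h => exact Or.inr h

lemma Fp_par_inv {A : Set Act} {t₁ t₂ : Proc Act} (h : Fp (par A t₁ t₂)) :
    Fp t₁ ∨ Fp t₂ := by
  cases h with
  | parL h => exact Or.inl h
  | parR h => exact Or.inr h

lemma lts1 : ∀ p : Proc Act,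
    (∃ α, (∃ s, Trans p α s) ∧ ∀ q, Trans p α q → Fp q) → Fp p := by
  intro p
  induction p with
  | nil =>
    rintro ⟨α, ⟨s, hs⟩, -⟩; cases hs
  | bot => intro _; exact Fp.bot
  | pre β t ih =>
    rintro ⟨α, ⟨s, hs⟩, hall⟩
    cases hs
    exact Fp.pre (hall t Trans.pre)
  | ec t₁ t₂ ih₁ ih₂ =>
    rintro ⟨α, ⟨s, hs⟩, hall⟩
    by_cases hF2 : Fp t₂
    · exact Fp.ecR hF2
    by_cases hF1 : Fp t₁
    · exact Fp.ecL hF1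
    cases hs with
    | ecL h1 h2 =>
      exact Fp.ecL (ih₁ ⟨_, ⟨_, h1⟩, fun q hq => hall q (Trans.ecL hq h2)⟩)
    | ecR h1 h2 =>
      exact Fp.ecR (ih₂ ⟨_, ⟨_, h2⟩, fun q hq => hall q (Trans.ecR h1 hq)⟩)
    | ecTauL h =>
      refine Fp.ecL (ih₁ ⟨ActT.tau, ⟨_, h⟩, fun q hq => ?_⟩)
      rcases Fp_ec_inv (hall (ec q t₂) (Trans.ecTauL hq)) with h' | h'
      · exact h'
      · exact absurd h' hF2
    | ecTauR h =>
      refine Fp.ecR (ih₂ ⟨ActT.tau, ⟨_, h⟩, fun q hq => ?_⟩)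
      rcases Fp_ec_inv (hall (ec t₁ q) (Trans.ecTauR hq)) with h' | h'
      · exact absurd h' hF1
      · exact h'
  | conj t₁ t₂ ih₁ ih₂ =>
    rintro ⟨α, ⟨s, hs⟩, hall⟩
    exact Fp.conjSucc hs hall
  | disj t₁ t₂ ih₁ ih₂ =>
    rintro ⟨α, ⟨s, hs⟩, hall⟩
    cases hs with
    | disjL => exact Fp.disj (hall t₁ Trans.disjL) (hall t₂ Trans.disjR)
    | disjR => exact Fp.disj (hall t₁ Trans.disjL) (hall t₂ Trans.disjR)
  | par A t₁ t₂ ih₁ ih₂ =>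
    rintro ⟨α, ⟨s, hs⟩, hall⟩
    by_cases hF2 : Fp t₂
    · exact Fp.parR hF2
    by_cases hF1 : Fp t₁
    · exact Fp.parL hF1
    cases hs with
    | parTauL h =>
      refine Fp.parL (ih₁ ⟨ActT.tau, ⟨_, h⟩, fun q hq => ?_⟩)
      rcases Fp_par_inv (hall _ (Trans.parTauL hq)) with h' | h'
      · exact h'
      · exact absurd h' hF2
    | parTauR h =>
      refine Fp.parR (ih₂ ⟨ActT.tau, ⟨_, h⟩, fun q hq => ?_⟩)
      rcases Fp_par_inv (hall _ (Trans.parTauR hq)) with h' | h'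
      · exact absurd h' hF1
      · exact h'
    | parL hA h1 h2 =>
      refine Fp.parL (ih₁ ⟨_, ⟨_, h1⟩, fun q hq => ?_⟩)
      rcases Fp_par_inv (hall _ (Trans.parL hA hq h2)) with h' | h'
      · exact h'
      · exact absurd h' hF2
    | parR hA h1 h2 =>
      refine Fp.parR (ih₂ ⟨_, ⟨_, h2⟩, fun q hq => ?_⟩)
      rcases Fp_par_inv (hall _ (Trans.parR hA h1 hq)) with h' | h'
      · exact absurd h' hF1
      · exact h'
    | parSync hA h1 h2 =>
      rename_i a t₁' t₂'
      by_cases h1all : ∀ x, Trans t₁ (ActT.act a) x → Fp x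
      · exact Fp.parL (ih₁ ⟨_, ⟨_, h1⟩, h1all⟩)
      · push_neg at h1all
        obtain ⟨x, hx, hFx⟩ := h1all
        refine Fp.parR (ih₂ ⟨_, ⟨_, h2⟩, fun y hy => ?_⟩)
        rcases Fp_par_inv (hall _ (Trans.parSync hA hx hy)) with h' | h'
        · exact absurd h' hFx
        · exact h'

/-- Size of a process. -/
def sz : Proc Act → ℕ
  | nil => 1
  | bot => 1
  | pre _ t => sz t + 1
  | ec a b => sz a + sz b + 1
  | conj a b => sz a + sz b + 1
  | disj a b => sz a + sz b + 1
  | par _ a b => sz a + sz b + 1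

lemma trans_sz {p q : Proc Act} {α} (h : Trans p α q) : sz q < sz p := by
  induction h <;> simp only [sz] <;> omega

lemma lts2aux : ∀ n (p : Proc Act), sz p < n → (¬ ∃ q, epsF p q) → Fp p := by
  intro n
  induction n with
  | zero => intro p hp; omega
  | succ n ih =>
    intro p hp hne
    by_contra hFp
    by_cases hstab : Stable p
    · exact hne ⟨p, Relation.ReflTransGen.refl, hFp, hFp, hstab⟩
    · have hex : ∃ r, Trans p ActT.tau r := by
        simp only [Stable, not_forall, not_not] at hstab
        exact hstab
      have hall : ∀ q, Trans p ActT.tau q → Fp q := by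
        intro q hq
        refine ih q (by have := trans_sz hq; omega) ?_
        rintro ⟨s, hchain, hq1, hq2, hq3⟩
        exact hne ⟨s, Relation.ReflTransGen.head ⟨hq, hFp, hq1⟩ hchain, hFp, hq2, hq3⟩
      obtain ⟨r, hr⟩ := hex
      exact hFp (lts1 p ⟨ActT.tau, ⟨r, hr⟩, hall⟩)

lemma Fprop {p : Proc Act} (h : Fp p) : ∀ q, Trans p ActT.tau q → Fp q := by
  induction h with
  | bot => intro q hq; cases hq
  | pre h ih =>
    intro q hq
    cases hq
    exact h
  | disj h₁ h₂ ih₁ ih₂ =>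
    intro q hq
    cases hq with
    | disjL => exact h₁
    | disjR => exact h₂
  | ecL h ih =>
    intro q hq
    cases hq with
    | ecTauL ht => exact Fp.ecL (ih _ ht)
    | ecTauR ht => exact Fp.ecL h
  | ecR h ih =>
    intro q hq
    cases hq with
    | ecTauL ht => exact Fp.ecR h
    | ecTauR ht => exact Fp.ecR (ih _ ht)
  | parL h ih =>
    intro q hq
    cases hq with
    | parTauL ht => exact Fp.parL (ih _ ht)
    | parTauR ht => exact Fp.parL h
  | parR h ih =>
    intro q hq
    cases hq with
    | parTauL ht => exact Fp.parR h
    | parTauR ht => exact Fp.parR (ih _ ht)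
  | conjL h ih =>
    intro q hq
    cases hq with
    | conjTauL ht => exact Fp.conjL (ih _ ht)
    | conjTauR ht => exact Fp.conjL h
  | conjR h ih =>
    intro q hq
    cases hq with
    | conjTauL ht => exact Fp.conjR h
    | conjTauR ht => exact Fp.conjR (ih _ ht)
  | conjReady hstab hne =>
    intro q hq
    exact absurd hq (hstab q)
  | @conjSucc t₁ t₂ α s h1 h2 ih =>
    intro q hq
    cases α with
    | tau => exact h2 q hq
    | act a => exact absurd h1 (tauPure ⟨q, hq⟩ a s)
  | conjStable hstab ih =>
    intro q hq
    cases hq with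
    | conjTauL ht =>
      refine Fp.conjStable fun y hy hsy =>
        hstab y (Relation.ReflTransGen.head (Trans.conjTauL ht) hy) hsy
    | conjTauR ht =>
      refine Fp.conjStable fun y hy hsy =>
        hstab y (Relation.ReflTransGen.head (Trans.conjTauR ht) hy) hsy

/-- The LTS of CLL is a τ-pure LLTS, and inconsistency propagates to
τ-successors of inconsistent unstable states. -/
theorem stmt1 {Act : Type} (p : Proc Act) :
    -- τ-purity
    ((∃ q, Trans p ActT.tau q) → ∀ (a : Act) (q : Proc Act), ¬ Trans p (ActT.act a) q) ∧
    -- (LTS1)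
    ((∃ α ∈ ready p, ∀ q, Trans p α q → Fp q) → Fp p) ∧
    -- (LTS2)
    ((¬ ∃ q, epsF p q) → Fp p) ∧
    -- moreover
    (Fp p → ActT.tau ∈ ready p → ∀ q, Trans p ActT.tau q → Fp q) := by
  refine ⟨tauPure, ?_, lts2aux (sz p + 1) p (by omega), fun h _ => Fprop h⟩
  rintro ⟨α, hα, hall⟩
  exact lts1 p ⟨α, hα, hall⟩

end Proc
end

section
/- The ready simulation preorder ⊑_RS is a precongruence for all operators of the recursion-free calculus CLL: if p ⊑_RS q then, for every process r, every α ∈ Act_τ and every A ⊆ Act, α.p ⊑_RS α.q, p □ r ⊑_RS q □ r, r □ p ⊑_RS r □ q, p ∧ r ⊑_RS q ∧ r, r ∧ p ⊑_RS r ∧ q, p ∨ r ⊑_RS q ∨ r, r ∨ p ⊑_RS r ∨ q, p ∥_A r ⊑_RS q ∥_A r, and r ∥_A p ⊑_RS r ∥_A q. -/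
open Classical

namespace Proc

variable {Act : Type}

/-- plain τ-step -/
def TStep (x z : Proc Act) : Prop := Trans x ActT.tau z

/-- size of a process term -/
def psize : Proc Act → Nat
  | nil => 1
  | bot => 1
  | pre _ t => psize t + 1
  | ec t₁ t₂ => psize t₁ + psize t₂ + 1
  | conj t₁ t₂ => psize t₁ + psize t₂ + 1
  | disj t₁ t₂ => psize t₁ + psize t₂ + 1
  | par _ t₁ t₂ => psize t₁ + psize t₂ + 1

lemma hasTau_of_tau {p q : Proc Act} (h : Trans p ActT.tau q) : hasTau p := by
  generalize hα : ActT.tau = α at h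
  induction h with
  | pre => simp [hasTau, hα.symm]
  | ecL _ _ _ => cases hα
  | ecR _ _ _ => cases hα
  | ecTauL _ ih => exact Or.inl (ih hα)
  | ecTauR _ ih => exact Or.inr (ih hα)
  | conjAct _ _ _ _ => cases hα
  | conjTauL _ ih => exact Or.inl (ih hα)
  | conjTauR _ ih => exact Or.inr (ih hα)
  | disjL => trivial
  | disjR => trivial
  | parTauL _ ih => exact Or.inl (ih hα)
  | parTauR _ ih => exact Or.inr (ih hα)
  | parL _ _ _ _ => cases hα
  | parR _ _ _ _ => cases hα
  | parSync _ _ _ _ _ => cases hα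

lemma tau_of_hasTau : ∀ p : Proc Act, hasTau p → ∃ q, Trans p ActT.tau q := by
  intro p
  induction p with
  | nil => intro h; exact absurd h (by simp [hasTau])
  | bot => intro h; exact absurd h (by simp [hasTau])
  | pre a t _ => intro h; cases h; exact ⟨t, Trans.pre⟩
  | ec t₁ t₂ ih₁ ih₂ =>
      rintro (h | h)
      · obtain ⟨q, hq⟩ := ih₁ h; exact ⟨_, Trans.ecTauL hq⟩
      · obtain ⟨q, hq⟩ := ih₂ h; exact ⟨_, Trans.ecTauR hq⟩
  | conj t₁ t₂ ih₁ ih₂ =>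
      rintro (h | h)
      · obtain ⟨q, hq⟩ := ih₁ h; exact ⟨_, Trans.conjTauL hq⟩
      · obtain ⟨q, hq⟩ := ih₂ h; exact ⟨_, Trans.conjTauR hq⟩
  | disj t₁ t₂ _ _ => intro _; exact ⟨t₁, Trans.disjL⟩
  | par A t₁ t₂ ih₁ ih₂ =>
      rintro (h | h)
      · obtain ⟨q, hq⟩ := ih₁ h; exact ⟨_, Trans.parTauL hq⟩
      · obtain ⟨q, hq⟩ := ih₂ h; exact ⟨_, Trans.parTauR hq⟩

lemma stable_iff {p : Proc Act} : Stable p ↔ ¬ hasTau p := by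
  constructor
  · intro hs h
    obtain ⟨q, hq⟩ := tau_of_hasTau p h
    exact hs q hq
  · intro h q hq; exact h (hasTau_of_tau hq)

lemma stable_of_visible {p q : Proc Act} {a : Act} (h : Trans p (ActT.act a) q) :
    Stable p := by
  rw [stable_iff]
  generalize hα : ActT.act a = α at h
  induction h with
  | pre => simp [hasTau, hα.symm]
  | ecL _ h2 ih => rintro (h | h); exact ih hα h; exact h2 h
  | ecR h1 _ ih => rintro (h | h); exact h1 h; exact absurd h (ih hα)
  | ecTauL _ _ => cases hα
  | ecTauR _ _ => cases hα
  | conjAct _ _ ih₁ ih₂ => rintro (h | h); exact ih₁ hα h; exact ih₂ hα h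
  | conjTauL _ _ => cases hα
  | conjTauR _ _ => cases hα
  | disjL => cases hα
  | disjR => cases hα
  | parTauL _ _ => cases hα
  | parTauR _ _ => cases hα
  | parL _ _ h2 ih => rintro (h | h); exact ih hα h; exact h2 h
  | parR _ h1 _ ih => rintro (h | h); exact h1 h; exact ih hα h
  | parSync _ _ _ ih₁ ih₂ => rintro (h | h); exact ih₁ hα h; exact ih₂ hα h

lemma trans_psize {p q : Proc Act} {α : ActT Act} (h : Trans p α q) :
    psize q < psize p := by
  induction h with
  | pre => simp [psize]
  | ecL _ _ ih => simp [psize]; omega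
  | ecR _ _ ih => simp [psize]; omega
  | ecTauL _ ih => simp [psize]; omega
  | ecTauR _ ih => simp [psize]; omega
  | conjAct _ _ ih₁ ih₂ => simp [psize]; omega
  | conjTauL _ ih => simp [psize]; omega
  | conjTauR _ ih => simp [psize]; omega
  | disjL => simp [psize]
  | disjR => simp [psize]
  | parTauL _ ih => simp [psize]; omega
  | parTauR _ ih => simp [psize]; omega
  | parL _ _ _ ih => simp [psize]; omega
  | parR _ _ _ ih => simp [psize]; omega
  | parSync _ _ _ ih₁ ih₂ => simp [psize]; omega

lemma fp_pre_iff {α : ActT Act} {t : Proc Act} : Fp (pre α t) ↔ Fp t := by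
  constructor
  · intro h; cases h; assumption
  · exact Fp.pre

lemma fp_ec_iff {t₁ t₂ : Proc Act} : Fp (ec t₁ t₂) ↔ Fp t₁ ∨ Fp t₂ := by
  constructor
  · intro h; cases h with
    | ecL h => exact Or.inl h
    | ecR h => exact Or.inr h
  · rintro (h | h); exact Fp.ecL h; exact Fp.ecR h

lemma fp_par_iff {A : Set Act} {t₁ t₂ : Proc Act} :
    Fp (par A t₁ t₂) ↔ Fp t₁ ∨ Fp t₂ := by
  constructor
  · intro h; cases h with
    | parL h => exact Or.inl h
    | parR h => exact Or.inr h
  · rintro (h | h); exact Fp.parL h; exact Fp.parR h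

lemma fp_disj_iff {t₁ t₂ : Proc Act} : Fp (disj t₁ t₂) ↔ Fp t₁ ∧ Fp t₂ := by
  constructor
  · intro h; cases h with
    | disj h₁ h₂ => exact ⟨h₁, h₂⟩
  · rintro ⟨h₁, h₂⟩; exact Fp.disj h₁ h₂

lemma not_fp_ec {t₁ t₂ : Proc Act} (h : ¬ Fp (ec t₁ t₂)) :
    ¬ Fp t₁ ∧ ¬ Fp t₂ :=
  ⟨fun h₁ => h (Fp.ecL h₁), fun h₂ => h (Fp.ecR h₂)⟩

lemma not_fp_par {A : Set Act} {t₁ t₂ : Proc Act} (h : ¬ Fp (par A t₁ t₂)) :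
    ¬ Fp t₁ ∧ ¬ Fp t₂ :=
  ⟨fun h₁ => h (Fp.parL h₁), fun h₂ => h (Fp.parR h₂)⟩

lemma not_fp_conj {t₁ t₂ : Proc Act} (h : ¬ Fp (conj t₁ t₂)) :
    ¬ Fp t₁ ∧ ¬ Fp t₂ :=
  ⟨fun h₁ => h (Fp.conjL h₁), fun h₂ => h (Fp.conjR h₂)⟩

/-- F is forward-closed along τ. -/
lemma fp_tau {p : Proc Act} (hF : Fp p) : ∀ q, Trans p ActT.tau q → Fp q := by
  induction hF with
  | bot => intro q hq; cases hq
  | @pre t α h ih =>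
      intro q hq; cases hq; exact h
  | disj h₁ h₂ _ _ =>
      intro q hq
      cases hq with
      | disjL => exact h₁
      | disjR => exact h₂
  | ecL h ih =>
      intro q hq
      cases hq with
      | ecTauL h' => exact Fp.ecL (ih _ h')
      | ecTauR _ => exact Fp.ecL h
  | ecR h ih =>
      intro q hq
      cases hq with
      | ecTauL _ => exact Fp.ecR h
      | ecTauR h' => exact Fp.ecR (ih _ h')
  | parL h ih =>
      intro q hq
      cases hq with
      | parTauL h' => exact Fp.parL (ih _ h')
      | parTauR _ => exact Fp.parL h
  | parR h ih =>
      intro q hq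
      cases hq with
      | parTauL _ => exact Fp.parR h
      | parTauR h' => exact Fp.parR (ih _ h')
  | conjL h ih =>
      intro q hq
      cases hq with
      | conjTauL h' => exact Fp.conjL (ih _ h')
      | conjTauR _ => exact Fp.conjL h
  | conjR h ih =>
      intro q hq
      cases hq with
      | conjTauL _ => exact Fp.conjR h
      | conjTauR h' => exact Fp.conjR (ih _ h')
  | conjReady hs _ =>
      intro q hq; exact absurd hq (hs q)
  | @conjSucc t₁ t₂ α s htr hall ih =>
      intro q hq
      cases α with
      | tau => exact hall q hq
      | act a => exact absurd hq (stable_of_visible htr q)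
  | @conjStable t₁ t₂ hall ih =>
      intro q hq
      cases hq with
      | @conjTauL _ t₁' _ h' =>
          exact Fp.conjStable (fun z hz hsz =>
            hall z (Relation.ReflTransGen.head h'.conjTauL hz) hsz)
      | @conjTauR _ t₂' _ h' =>
          exact Fp.conjStable (fun z hz hsz =>
            hall z (Relation.ReflTransGen.head h'.conjTauR hz) hsz)

lemma fp_tau_star {p q : Proc Act}
    (h : Relation.ReflTransGen (fun x z => Trans x ActT.tau z) p q) (hF : Fp p) :
    Fp q := by
  induction h with
  | refl => exact hF
  | tail _ h ih => exact fp_tau ih _ h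

lemma not_fp_back {p q : Proc Act}
    (h : Relation.ReflTransGen (fun x z => Trans x ActT.tau z) p q) (hF : ¬ Fp q) :
    ¬ Fp p := fun hp => hF (fp_tau_star h hp)

/-- upgrade a plain τ-path with consistent endpoint to a consistent τ-path -/
lemma upgrade_path {p q : Proc Act}
    (h : Relation.ReflTransGen (fun x z => Trans x ActT.tau z) p q) (hF : ¬ Fp q) :
    Relation.ReflTransGen (tauStepF (Act := Act)) p q := by
  induction h using Relation.ReflTransGen.head_induction_on with
  | refl => exact Relation.ReflTransGen.refl
  | head h hrest ih =>
      exact Relation.ReflTransGen.head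
        ⟨h, not_fp_back (Relation.ReflTransGen.head h hrest) hF,
          not_fp_back hrest hF⟩ ih

lemma project_path {p q : Proc Act}
    (h : Relation.ReflTransGen (tauStepF (Act := Act)) p q) :
    Relation.ReflTransGen (fun x z => Trans x ActT.tau z) p q := by
  induction h with
  | refl => exact Relation.ReflTransGen.refl
  | tail _ h ih => exact ih.tail h.1

lemma stable_path_eq {p q : Proc Act} (hs : Stable p)
    (h : Relation.ReflTransGen (tauStepF (Act := Act)) p q) : q = p := by
  cases h.cases_head with
  | inl h => exact h.symm
  | inr h => obtain ⟨c, hc, _⟩ := h; exact absurd hc.1 (hs c)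

lemma stable_path_eq' {p q : Proc Act} (hs : Stable p)
    (h : Relation.ReflTransGen (fun x z => Trans x ActT.tau z) p q) : q = p := by
  cases h.cases_head with
  | inl h => exact h.symm
  | inr h => obtain ⟨c, hc, _⟩ := h; exact absurd hc (hs c)

/-- a consistent unstable process has a consistent τ-successor -/
lemma cons_step : ∀ p : Proc Act, ¬ Fp p → hasTau p →
    ∃ q, Trans p ActT.tau q ∧ ¬ Fp q := by
  intro p
  induction p with
  | nil => intro _ h; exact absurd h (by simp [hasTau])
  | bot => intro h _; exact absurd Fp.bot h
  | pre a t _ =>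
      intro hF h; cases h
      exact ⟨t, Trans.pre, fun ht => hF (Fp.pre ht)⟩
  | ec t₁ t₂ ih₁ ih₂ =>
      intro hF h
      rw [fp_ec_iff] at hF; push_neg at hF
      cases h with
      | inl h =>
          obtain ⟨q, hq, hqF⟩ := ih₁ hF.1 h
          exact ⟨_, Trans.ecTauL hq, by rw [fp_ec_iff]; push_neg; exact ⟨hqF, hF.2⟩⟩
      | inr h =>
          obtain ⟨q, hq, hqF⟩ := ih₂ hF.2 h
          exact ⟨_, Trans.ecTauR hq, by rw [fp_ec_iff]; push_neg; exact ⟨hF.1, hqF⟩⟩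
  | conj t₁ t₂ _ _ =>
      intro hF h
      obtain ⟨q, hq⟩ := tau_of_hasTau _ h
      by_contra hc
      push_neg at hc
      exact hF (Fp.conjSucc hq (fun y hy => hc y hy))
  | disj t₁ t₂ _ _ =>
      intro hF _
      rw [fp_disj_iff] at hF
      rcases not_and_or.mp hF with h | h
      · exact ⟨t₁, Trans.disjL, h⟩
      · exact ⟨t₂, Trans.disjR, h⟩
  | par A t₁ t₂ ih₁ ih₂ =>
      intro hF h
      rw [fp_par_iff] at hF; push_neg at hF
      cases h with
      | inl h =>
          obtain ⟨q, hq, hqF⟩ := ih₁ hF.1 h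
          exact ⟨_, Trans.parTauL hq, by rw [fp_par_iff]; push_neg; exact ⟨hqF, hF.2⟩⟩
      | inr h =>
          obtain ⟨q, hq, hqF⟩ := ih₂ hF.2 h
          exact ⟨_, Trans.parTauR hq, by rw [fp_par_iff]; push_neg; exact ⟨hF.1, hqF⟩⟩

/-- a consistent process can reach a consistent stable process -/
lemma exists_epsF {p : Proc Act} (hF : ¬ Fp p) : ∃ q, epsF p q := by
  obtain ⟨n, hn⟩ : ∃ n, psize p ≤ n := ⟨psize p, le_refl _⟩
  induction n generalizing p with
  | zero => cases p <;> simp [psize] at hn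
  | succ n ih =>
      by_cases hs : Stable p
      · exact ⟨p, Relation.ReflTransGen.refl, hF, hF, hs⟩
      · rw [stable_iff, not_not] at hs
        obtain ⟨q, hq, hqF⟩ := cons_step p hF hs
        have : psize q ≤ n := by
          have := trans_psize hq; omega
        obtain ⟨r, hr1, _, hr3, hr4⟩ := ih hqF this
        exact ⟨r, Relation.ReflTransGen.head ⟨hq, hF, hqF⟩ hr1, hF, hr3, hr4⟩

lemma rsLE_fp {p q : Proc Act} (h : rsLE p q) (hF : ¬ Fp p) : ¬ Fp q := by
  obtain ⟨p', hp'⟩ := exists_epsF hF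
  obtain ⟨q', hq', _⟩ := h p' hp'
  exact hq'.2.1

/-- ⊏̃_RS is itself a stable ready simulation -/
lemma rsLT_spec {p q : Proc Act} (h : rsLT p q) :
    Stable p ∧ Stable q ∧ (¬ Fp p → ¬ Fp q) ∧
    (∀ a p', wkF a p p' → ∃ q', wkF a q q' ∧ rsLT p' q') ∧
    (¬ Fp p → ready p = ready q) := by
  obtain ⟨R, hR, hpq⟩ := h
  obtain ⟨h1, h2, h3, h4, h5⟩ := hR p q hpq
  refine ⟨h1, h2, h3, fun a p' hw => ?_, h5⟩
  obtain ⟨q', hq', hRq⟩ := h4 a p' hw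
  exact ⟨q', hq', R, hR, hRq⟩

lemma rsLT_refl {p : Proc Act} (hs : Stable p) : rsLT p p := by
  refine ⟨fun a b => a = b ∧ Stable a, ?_, rfl, hs⟩
  rintro x y ⟨rfl, hsx⟩
  refine ⟨hsx, hsx, id, fun a p' hw => ⟨p', hw, rfl, ?_⟩, fun _ => rfl⟩
  obtain ⟨r, s, _, _, _, _, _, _, _, hst⟩ := hw
  exact hst

lemma stable_conj {u v : Proc Act} (hu : Stable u) (hv : Stable v) :
    Stable (conj u v) := by
  intro z hz
  cases hz with
  | conjTauL h => exact hu _ h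
  | conjTauR h => exact hv _ h

lemma stable_ec {u v : Proc Act} (hu : Stable u) (hv : Stable v) :
    Stable (ec u v) := by
  intro z hz
  cases hz with
  | ecTauL h => exact hu _ h
  | ecTauR h => exact hv _ h

lemma stable_par {A : Set Act} {u v : Proc Act} (hu : Stable u) (hv : Stable v) :
    Stable (par A u v) := by
  intro z hz
  cases hz with
  | parTauL h => exact hu _ h
  | parTauR h => exact hv _ h

lemma stable_pre_act {a : Act} {t : Proc Act} : Stable (pre (ActT.act a) t) := by
  intro z hz; cases hz

-- ready-set characterizations for stable components
lemma ready_conj {u v : Proc Act} :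
    ready (conj u v) = ready u ∩ ready v ∪
      {α | α = ActT.tau ∧ (α ∈ ready u ∨ α ∈ ready v)} := by
  ext α
  constructor
  · rintro ⟨w, hw⟩
    cases hw with
    | conjAct h₁ h₂ => exact Or.inl ⟨⟨_, h₁⟩, ⟨_, h₂⟩⟩
    | conjTauL h => exact Or.inr ⟨rfl, Or.inl ⟨_, h⟩⟩
    | conjTauR h => exact Or.inr ⟨rfl, Or.inr ⟨_, h⟩⟩
  · rintro (⟨⟨w₁, h₁⟩, ⟨w₂, h₂⟩⟩ | ⟨rfl, (⟨w, hw⟩ | ⟨w, hw⟩)⟩)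
    · cases α with
      | act a => exact ⟨_, Trans.conjAct h₁ h₂⟩
      | tau => exact ⟨_, Trans.conjTauL h₁⟩
    · exact ⟨_, Trans.conjTauL hw⟩
    · exact ⟨_, Trans.conjTauR hw⟩

lemma ready_tau_not {p : Proc Act} (hs : Stable p) : ActT.tau ∉ ready p := by
  rintro ⟨w, hw⟩; exact hs w hw

lemma ready_conj_stable {u v : Proc Act} (hu : Stable u) (hv : Stable v) :
    ready (conj u v) = ready u ∩ ready v := by
  rw [ready_conj]
  ext α
  simp only [Set.mem_union, Set.mem_setOf_eq]
  constructor
  · rintro (h | ⟨rfl, h | h⟩)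
    · exact h
    · exact absurd h (ready_tau_not hu)
    · exact absurd h (ready_tau_not hv)
  · exact Or.inl

lemma ready_ec_stable {u v : Proc Act} (hu : Stable u) (hv : Stable v) :
    ready (ec u v) = ready u ∪ ready v := by
  ext α
  constructor
  · rintro ⟨w, hw⟩
    cases hw with
    | ecL h _ => exact Or.inl ⟨_, h⟩
    | ecR _ h => exact Or.inr ⟨_, h⟩
    | ecTauL h => exact absurd h (hu _)
    | ecTauR h => exact absurd h (hv _)
  · rintro (⟨w, hw⟩ | ⟨w, hw⟩)
    · cases α with
      | act a => exact ⟨_, Trans.ecL hw (stable_iff.mp hv)⟩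
      | tau => exact absurd hw (hu _)
    · cases α with
      | act a => exact ⟨_, Trans.ecR (stable_iff.mp hu) hw⟩
      | tau => exact absurd hw (hv _)

lemma ready_mono {p q : Proc Act} (h : ready p = ready q) {α : ActT Act}
    {w : Proc Act} (ht : Trans p α w) : ∃ w', Trans q α w' := by
  have hm : α ∈ ready q := h ▸ (⟨w, ht⟩ : α ∈ ready p)
  exact hm

lemma ready_par_stable {A : Set Act} {u v u' v' : Proc Act}
    (hu : Stable u) (hv : Stable v) (hu' : Stable u') (hv' : Stable v')
    (h₁ : ready u = ready u') (h₂ : ready v = ready v') :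
    ready (par A u v) = ready (par A u' v') := by
  ext α
  constructor <;> rintro ⟨w, hw⟩
  · cases hw with
    | parTauL h => exact absurd h (hu _)
    | parTauR h => exact absurd h (hv _)
    | parL hA h _ =>
        obtain ⟨w', hw'⟩ := ready_mono h₁ h
        exact ⟨_, Trans.parL hA hw' (stable_iff.mp hv')⟩
    | parR hA _ h =>
        obtain ⟨w', hw'⟩ := ready_mono h₂ h
        exact ⟨_, Trans.parR hA (stable_iff.mp hu') hw'⟩
    | parSync hA h h' =>
        obtain ⟨w₁, hw₁⟩ := ready_mono h₁ h
        obtain ⟨w₂, hw₂⟩ := ready_mono h₂ h'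
        exact ⟨_, Trans.parSync hA hw₁ hw₂⟩
  · cases hw with
    | parTauL h => exact absurd h (hu' _)
    | parTauR h => exact absurd h (hv' _)
    | parL hA h _ =>
        obtain ⟨w', hw'⟩ := ready_mono h₁.symm h
        exact ⟨_, Trans.parL hA hw' (stable_iff.mp hv)⟩
    | parR hA _ h =>
        obtain ⟨w', hw'⟩ := ready_mono h₂.symm h
        exact ⟨_, Trans.parR hA (stable_iff.mp hu) hw'⟩
    | parSync hA h h' =>
        obtain ⟨w₁, hw₁⟩ := ready_mono h₁.symm h
        obtain ⟨w₂, hw₂⟩ := ready_mono h₂.symm h'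
        exact ⟨_, Trans.parSync hA hw₁ hw₂⟩

-- τ-path decompositions
lemma conj_pathF {w z : Proc Act}
    (h : Relation.ReflTransGen (tauStepF (Act := Act)) w z) :
    ∀ u v, w = conj u v → ∃ u' v', z = conj u' v' ∧
      Relation.ReflTransGen (tauStepF (Act := Act)) u u' ∧
      Relation.ReflTransGen (tauStepF (Act := Act)) v v' := by
  induction h using Relation.ReflTransGen.head_induction_on with
  | refl => exact fun u v h => ⟨u, v, h, Relation.ReflTransGen.refl, Relation.ReflTransGen.refl⟩
  | head hstep _ ih =>
      rintro u v rfl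
      obtain ⟨htr, hF1, hF2⟩ := hstep
      cases htr with
      | @conjTauL _ u₁ _ h =>
          obtain ⟨u', v', rfl, p1, p2⟩ := ih u₁ v rfl
          exact ⟨u', v', rfl,
            Relation.ReflTransGen.head
              ⟨h, (not_fp_conj hF1).1, (not_fp_conj hF2).1⟩ p1, p2⟩
      | @conjTauR _ v₁ _ h =>
          obtain ⟨u', v', rfl, p1, p2⟩ := ih u v₁ rfl
          exact ⟨u', v', rfl, p1,
            Relation.ReflTransGen.head
              ⟨h, (not_fp_conj hF1).2, (not_fp_conj hF2).2⟩ p2⟩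

lemma ec_pathF {w z : Proc Act}
    (h : Relation.ReflTransGen (tauStepF (Act := Act)) w z) :
    ∀ u v, w = ec u v → ∃ u' v', z = ec u' v' ∧
      Relation.ReflTransGen (tauStepF (Act := Act)) u u' ∧
      Relation.ReflTransGen (tauStepF (Act := Act)) v v' := by
  induction h using Relation.ReflTransGen.head_induction_on with
  | refl => exact fun u v h => ⟨u, v, h, Relation.ReflTransGen.refl, Relation.ReflTransGen.refl⟩
  | head hstep _ ih =>
      rintro u v rfl
      obtain ⟨htr, hF1, hF2⟩ := hstep
      cases htr with
      | @ecTauL _ u₁ _ h =>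
          obtain ⟨u', v', rfl, p1, p2⟩ := ih u₁ v rfl
          exact ⟨u', v', rfl,
            Relation.ReflTransGen.head ⟨h, (not_fp_ec hF1).1, (not_fp_ec hF2).1⟩ p1, p2⟩
      | @ecTauR _ v₁ _ h =>
          obtain ⟨u', v', rfl, p1, p2⟩ := ih u v₁ rfl
          exact ⟨u', v', rfl, p1,
            Relation.ReflTransGen.head ⟨h, (not_fp_ec hF1).2, (not_fp_ec hF2).2⟩ p2⟩

lemma par_pathF {w z : Proc Act}
    (h : Relation.ReflTransGen (tauStepF (Act := Act)) w z) :
    ∀ (A : Set Act) u v, w = par A u v → ∃ u' v', z = par A u' v' ∧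
      Relation.ReflTransGen (tauStepF (Act := Act)) u u' ∧
      Relation.ReflTransGen (tauStepF (Act := Act)) v v' := by
  induction h using Relation.ReflTransGen.head_induction_on with
  | refl => exact fun A u v h => ⟨u, v, h, Relation.ReflTransGen.refl, Relation.ReflTransGen.refl⟩
  | head hstep _ ih =>
      rintro A u v rfl
      obtain ⟨htr, hF1, hF2⟩ := hstep
      cases htr with
      | @parTauL _ u₁ _ _ h =>
          obtain ⟨u', v', rfl, p1, p2⟩ := ih A u₁ v rfl
          exact ⟨u', v', rfl,
            Relation.ReflTransGen.head ⟨h, (not_fp_par hF1).1, (not_fp_par hF2).1⟩ p1, p2⟩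
      | @parTauR _ v₁ _ _ h =>
          obtain ⟨u', v', rfl, p1, p2⟩ := ih A u v₁ rfl
          exact ⟨u', v', rfl, p1,
            Relation.ReflTransGen.head ⟨h, (not_fp_par hF1).2, (not_fp_par hF2).2⟩ p2⟩

-- plain τ-path lifts
lemma conj_lift {u u' v v' : Proc Act}
    (h : Relation.ReflTransGen (fun x z => Trans x ActT.tau z) u u')
    (h' : Relation.ReflTransGen (fun x z => Trans x ActT.tau z) v v') :
    Relation.ReflTransGen (fun x z => Trans x ActT.tau z) (conj u v) (conj u' v') := by
  have l1 : Relation.ReflTransGen (fun x z => Trans x ActT.tau z) (conj u v) (conj u' v) := by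
    induction h with
    | refl => exact Relation.ReflTransGen.refl
    | tail _ hstep ih => exact ih.tail (Trans.conjTauL hstep)
  have l2 : Relation.ReflTransGen (fun x z => Trans x ActT.tau z) (conj u' v) (conj u' v') := by
    induction h' with
    | refl => exact Relation.ReflTransGen.refl
    | tail _ hstep ih => exact ih.tail (Trans.conjTauR hstep)
  exact l1.trans l2

lemma ec_lift {u u' v v' : Proc Act}
    (h : Relation.ReflTransGen (fun x z => Trans x ActT.tau z) u u')
    (h' : Relation.ReflTransGen (fun x z => Trans x ActT.tau z) v v') :
    Relation.ReflTransGen (fun x z => Trans x ActT.tau z) (ec u v) (ec u' v') := by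
  have l1 : Relation.ReflTransGen (fun x z => Trans x ActT.tau z) (ec u v) (ec u' v) := by
    induction h with
    | refl => exact Relation.ReflTransGen.refl
    | tail _ hstep ih => exact ih.tail (Trans.ecTauL hstep)
  have l2 : Relation.ReflTransGen (fun x z => Trans x ActT.tau z) (ec u' v) (ec u' v') := by
    induction h' with
    | refl => exact Relation.ReflTransGen.refl
    | tail _ hstep ih => exact ih.tail (Trans.ecTauR hstep)
  exact l1.trans l2

lemma par_lift {A : Set Act} {u u' v v' : Proc Act}
    (h : Relation.ReflTransGen (fun x z => Trans x ActT.tau z) u u')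
    (h' : Relation.ReflTransGen (fun x z => Trans x ActT.tau z) v v') :
    Relation.ReflTransGen (fun x z => Trans x ActT.tau z) (par A u v) (par A u' v') := by
  have l1 : Relation.ReflTransGen (fun x z => Trans x ActT.tau z) (par A u v) (par A u' v) := by
    induction h with
    | refl => exact Relation.ReflTransGen.refl
    | tail _ hstep ih => exact ih.tail (Trans.parTauL hstep)
  have l2 : Relation.ReflTransGen (fun x z => Trans x ActT.tau z) (par A u' v) (par A u' v') := by
    induction h' with
    | refl => exact Relation.ReflTransGen.refl
    | tail _ hstep ih => exact ih.tail (Trans.parTauR hstep)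
  exact l1.trans l2

lemma pathF_last {x y : Proc Act}
    (h : Relation.ReflTransGen (tauStepF (Act := Act)) x y) (hx : ¬ Fp x) :
    ¬ Fp y := by
  induction h with
  | refl => exact hx
  | tail _ hstep _ => exact hstep.2.2

/-- decompose a weak visible transition from a stable state -/
lemma wkF_decomp_stable {p w : Proc Act} {a : Act} (hs : Stable p)
    (h : wkF a p w) :
    ¬ Fp p ∧ ∃ s, Trans p (ActT.act a) s ∧ ¬ Fp s ∧
      Relation.ReflTransGen (tauStepF (Act := Act)) s w ∧ ¬ Fp w ∧ Stable w := by
  obtain ⟨r, s, hpr, hFp, hFr, htr, hFs, hsw, hFw, hstw⟩ := h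
  have : r = p := stable_path_eq hs hpr
  subst this
  exact ⟨hFp, s, htr, hFs, hsw, hFw, hstw⟩

lemma wkF_build_stable {p s w : Proc Act} {a : Act} (hFp : ¬ Fp p)
    (htr : Trans p (ActT.act a) s)
    (hsw : Relation.ReflTransGen (fun x z => Trans x ActT.tau z) s w)
    (hFw : ¬ Fp w) (hstw : Stable w) : wkF a p w :=
  ⟨p, s, Relation.ReflTransGen.refl, hFp, hFp, htr, not_fp_back hsw hFw,
    upgrade_path hsw hFw, hFw, hstw⟩

lemma conj_wkF_decomp {u v w : Proc Act} {a : Act}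
    (hu : Stable u) (hv : Stable v) (h : wkF a (conj u v) w) :
    ¬ Fp (conj u v) ∧ ∃ u₂ v₂, w = conj u₂ v₂ ∧ ¬ Fp (conj u₂ v₂) ∧
      wkF a u u₂ ∧ wkF a v v₂ := by
  obtain ⟨hFp, s, htr, hFs, hsw, hFw, hstw⟩ :=
    wkF_decomp_stable (stable_conj hu hv) h
  cases htr with
  | conjAct h₁ h₂ =>
      obtain ⟨u₂, v₂, rfl, p1, p2⟩ := conj_pathF hsw _ _ rfl
      have hFu := not_fp_conj hFp
      have hFs' := not_fp_conj hFs
      have hFw' := not_fp_conj hFw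
      have hstu₂ : Stable u₂ := fun z hz => hstw _ (Trans.conjTauL hz)
      have hstv₂ : Stable v₂ := fun z hz => hstw _ (Trans.conjTauR hz)
      exact ⟨hFp, u₂, v₂, rfl, hFw,
        ⟨u, _, Relation.ReflTransGen.refl, hFu.1, hFu.1, h₁, hFs'.1, p1,
          hFw'.1, hstu₂⟩,
        ⟨v, _, Relation.ReflTransGen.refl, hFu.2, hFu.2, h₂, hFs'.2, p2,
          hFw'.2, hstv₂⟩⟩

lemma conj_wkF_build {u v u₂ v₂ : Proc Act} {a : Act}
    (hu : Stable u) (hv : Stable v)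
    (hnc : ¬ Fp (conj u v)) (hnc2 : ¬ Fp (conj u₂ v₂))
    (h1 : wkF a u u₂) (h2 : wkF a v v₂) : wkF a (conj u v) (conj u₂ v₂) := by
  obtain ⟨_, s₁, ht₁, _, p1, _, hstu₂⟩ := wkF_decomp_stable hu h1
  obtain ⟨_, s₂, ht₂, _, p2, _, hstv₂⟩ := wkF_decomp_stable hv h2
  exact wkF_build_stable hnc (Trans.conjAct ht₁ ht₂)
    (conj_lift (project_path p1) (project_path p2)) hnc2
    (stable_conj hstu₂ hstv₂)

lemma path_psize_le {p q : Proc Act}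
    (h : Relation.ReflTransGen (tauStepF (Act := Act)) p q) :
    psize q ≤ psize p := by
  induction h with
  | refl => exact le_refl _
  | tail _ hstep ih => exact le_trans (le_of_lt (trans_psize hstep.1)) ih

/-- consistency of conjunction transfers along ⊏̃_RS (left argument) -/
lemma conjC_left : ∀ n : Nat, ∀ x' y : Proc Act, psize x' + psize y ≤ n →
    ∀ x, Stable y → rsLT x x' → ¬ Fp (conj x y) → ¬ Fp (conj x' y) := by
  intro n
  induction n using Nat.strong_induction_on with
  | _ n ihn =>
  intro x' y hn x hy hlt hnc hF
  obtain ⟨hsx, hsx', hcons, htrans, hready⟩ := rsLT_spec hlt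
  have hFx : ¬ Fp x := (not_fp_conj hnc).1
  have hFy : ¬ Fp y := (not_fp_conj hnc).2
  have hFx' : ¬ Fp x' := hcons hFx
  have hrdy : ready x = ready x' := hready hFx
  have key : ∀ t, Fp t → t = conj x' y → False := by
    intro t hFt
    induction hFt with
    | bot => intro h; cases h
    | pre _ _ => intro h; cases h
    | disj _ _ _ _ => intro h; cases h
    | ecL _ _ => intro h; cases h
    | ecR _ _ => intro h; cases h
    | parL _ _ => intro h; cases h
    | parR _ _ => intro h; cases h
    | conjL h _ =>
        rintro heq
        injection heq with e1 e2
        subst e1; subst e2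
        exact hFx' h
    | conjR h _ =>
        rintro heq
        injection heq with e1 e2
        subst e1; subst e2
        exact hFy h
    | conjReady hst hne =>
        rintro heq
        injection heq with e1 e2
        subst e1; subst e2
        exact hnc (Fp.conjReady (stable_conj hsx hy) (hrdy ▸ hne))
    | @conjSucc t₁ t₂ α s hα hall ih =>
        rintro heq
        injection heq with e1 e2
        rw [e1, e2] at hα hall
        cases α with
        | tau => exact stable_conj hsx' hy s hα
        | act a =>
            cases hα with
            | @conjAct _ _ s₁' _ y₁' hx'₁ hy₁ =>
                -- conj x y has an a-transition
                obtain ⟨u, hu⟩ : ∃ u, Trans x (ActT.act a) u :=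
                  ready_mono hrdy.symm hx'₁
                have hex : ∃ w, Trans (conj x y) (ActT.act a) w ∧ ¬ Fp w := by
                  by_contra hcw
                  push_neg at hcw
                  exact hnc (Fp.conjSucc (Trans.conjAct hu hy₁)
                    (fun z hz => hcw z hz))
                obtain ⟨w, hw, hFw⟩ := hex
                cases hw with
                | @conjAct _ _ x₁ _ y₁ hx₁ hy₁' =>
                    obtain ⟨w₂, hpw, _, hFw₂, hstw₂⟩ := exists_epsF hFw
                    obtain ⟨x₂, y₂, rfl, px, py⟩ := conj_pathF hpw _ _ rfl
                    have hFw' := not_fp_conj hFw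
                    have hFw₂' := not_fp_conj hFw₂
                    have hstx₂ : Stable x₂ :=
                      fun z hz => hstw₂ _ (Trans.conjTauL hz)
                    have hsty₂ : Stable y₂ :=
                      fun z hz => hstw₂ _ (Trans.conjTauR hz)
                    have hwk : wkF a x x₂ :=
                      ⟨x, x₁, Relation.ReflTransGen.refl, hFx, hFx, hx₁,
                        hFw'.1, px, hFw₂'.1, hstx₂⟩
                    obtain ⟨x₂', hwk', hlt₂⟩ := htrans a x₂ hwk
                    obtain ⟨_, s', ht', hFs', p', hFx₂', hstx₂'⟩ :=
                      wkF_decomp_stable hsx' hwk'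
                    have hFmid : Fp (conj s' y₁) :=
                      hall _ (Trans.conjAct ht' hy₁')
                    have hFend : Fp (conj x₂' y₂) :=
                      fp_tau_star (conj_lift (project_path p') (project_path py))
                        hFmid
                    have hsz : psize x₂' + psize y₂ < n := by
                      have h1 : psize x₂' ≤ psize s' := path_psize_le p'
                      have h2 : psize s' < psize x' := trans_psize ht'
                      have h3 : psize y₂ ≤ psize y₁ := path_psize_le py
                      have h4 : psize y₁ < psize y := trans_psize hy₁'
                      omega
                    exact ihn _ hsz x₂' y₂ (le_refl _) x₂ hsty₂ hlt₂ hFw₂ hFend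
    | @conjStable t₁ t₂ h ih =>
        intro heq
        refine ih (conj t₁ t₂) Relation.ReflTransGen.refl ?_ heq
        rw [heq]
        exact stable_conj hsx' hy
  exact key _ hF rfl

/-- consistency of conjunction transfers along ⊏̃_RS (right argument) -/
lemma conjC_right : ∀ n : Nat, ∀ x y' : Proc Act, psize x + psize y' ≤ n →
    ∀ y, Stable x → rsLT y y' → ¬ Fp (conj x y) → ¬ Fp (conj x y') := by
  intro n
  induction n using Nat.strong_induction_on with
  | _ n ihn =>
  intro x y' hn y hx hlt hnc hF
  obtain ⟨hsy, hsy', hcons, htrans, hready⟩ := rsLT_spec hlt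
  have hFx : ¬ Fp x := (not_fp_conj hnc).1
  have hFy : ¬ Fp y := (not_fp_conj hnc).2
  have hFy' : ¬ Fp y' := hcons hFy
  have hrdy : ready y = ready y' := hready hFy
  have key : ∀ t, Fp t → t = conj x y' → False := by
    intro t hFt
    induction hFt with
    | bot => intro h; cases h
    | pre _ _ => intro h; cases h
    | disj _ _ _ _ => intro h; cases h
    | ecL _ _ => intro h; cases h
    | ecR _ _ => intro h; cases h
    | parL _ _ => intro h; cases h
    | parR _ _ => intro h; cases h
    | conjL h _ =>
        rintro heq
        injection heq with e1 e2
        subst e1; subst e2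
        exact hFx h
    | conjR h _ =>
        rintro heq
        injection heq with e1 e2
        subst e1; subst e2
        exact hFy' h
    | conjReady hst hne =>
        rintro heq
        injection heq with e1 e2
        subst e1; subst e2
        exact hnc (Fp.conjReady (stable_conj hx hsy) (hrdy ▸ hne))
    | @conjSucc t₁ t₂ α s hα hall ih =>
        rintro heq
        injection heq with e1 e2
        rw [e1, e2] at hα hall
        cases α with
        | tau => exact stable_conj hx hsy' s hα
        | act a =>
            cases hα with
            | @conjAct _ _ x₁' _ s₁' hx₁' hy'₁ =>
                obtain ⟨u, hu⟩ : ∃ u, Trans y (ActT.act a) u :=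
                  ready_mono hrdy.symm hy'₁
                have hex : ∃ w, Trans (conj x y) (ActT.act a) w ∧ ¬ Fp w := by
                  by_contra hcw
                  push_neg at hcw
                  exact hnc (Fp.conjSucc (Trans.conjAct hx₁' hu)
                    (fun z hz => hcw z hz))
                obtain ⟨w, hw, hFw⟩ := hex
                cases hw with
                | @conjAct _ _ x₁ _ y₁ hx₁ hy₁' =>
                    obtain ⟨w₂, hpw, _, hFw₂, hstw₂⟩ := exists_epsF hFw
                    obtain ⟨x₂, y₂, rfl, px, py⟩ := conj_pathF hpw _ _ rfl
                    have hFw' := not_fp_conj hFw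
                    have hFw₂' := not_fp_conj hFw₂
                    have hstx₂ : Stable x₂ :=
                      fun z hz => hstw₂ _ (Trans.conjTauL hz)
                    have hsty₂ : Stable y₂ :=
                      fun z hz => hstw₂ _ (Trans.conjTauR hz)
                    have hwk : wkF a y y₂ :=
                      ⟨y, y₁, Relation.ReflTransGen.refl, hFy, hFy, hy₁',
                        hFw'.2, py, hFw₂'.2, hsty₂⟩
                    obtain ⟨y₂', hwk', hlt₂⟩ := htrans a y₂ hwk
                    obtain ⟨_, s', ht', hFs', p', hFy₂', hsty₂'⟩ :=
                      wkF_decomp_stable hsy' hwk'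
                    have hFmid : Fp (conj x₁ s') :=
                      hall _ (Trans.conjAct hx₁ ht')
                    have hFend : Fp (conj x₂ y₂') :=
                      fp_tau_star (conj_lift (project_path px) (project_path p'))
                        hFmid
                    have hsz : psize x₂ + psize y₂' < n := by
                      have h1 : psize y₂' ≤ psize s' := path_psize_le p'
                      have h2 : psize s' < psize y' := trans_psize ht'
                      have h3 : psize x₂ ≤ psize x₁ := path_psize_le px
                      have h4 : psize x₁ < psize x := trans_psize hx₁
                      omega
                    exact ihn _ hsz x₂ y₂' (le_refl _) y₂ hstx₂ hlt₂ hFw₂ hFend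
    | @conjStable t₁ t₂ h ih =>
        intro heq
        refine ih (conj t₁ t₂) Relation.ReflTransGen.refl ?_ heq
        rw [heq]
        exact stable_conj hx hsy'
  exact key _ hF rfl

lemma rsLT_conj {u u' v v' : Proc Act} (h1 : rsLT u u') (h2 : rsLT v v') :
    rsLT (conj u v) (conj u' v') := by
  refine ⟨fun s t => ∃ a b a' b', s = conj a b ∧ t = conj a' b' ∧
    rsLT a a' ∧ rsLT b b', ?_, u, v, u', v', rfl, rfl, h1, h2⟩
  rintro s t ⟨a, b, a', b', rfl, rfl, ha, hb⟩
  obtain ⟨hsa, hsa', hca, hta, hra⟩ := rsLT_spec ha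
  obtain ⟨hsb, hsb', hcb, htb, hrb⟩ := rsLT_spec hb
  have hCC : ¬ Fp (conj a b) → ¬ Fp (conj a' b') := by
    intro hnc
    have step1 : ¬ Fp (conj a' b) := conjC_left _ a' b (le_refl _) a hsb ha hnc
    exact conjC_right _ a' b' (le_refl _) b hsa' hb step1
  refine ⟨stable_conj hsa hsb, stable_conj hsa' hsb', hCC, ?_, ?_⟩
  · intro c w hw
    obtain ⟨hnc, a₂, b₂, rfl, hnc2, hwa, hwb⟩ := conj_wkF_decomp hsa hsb hw
    obtain ⟨a₂', hwa', hlta⟩ := hta c a₂ hwa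
    obtain ⟨b₂', hwb', hltb⟩ := htb c b₂ hwb
    have hnc' := hCC hnc
    have hnc2' : ¬ Fp (conj a₂' b₂') := by
      obtain ⟨hsa₂, hsa₂', _, _, _⟩ := rsLT_spec hlta
      obtain ⟨hsb₂, hsb₂', _, _, _⟩ := rsLT_spec hltb
      have s1 : ¬ Fp (conj a₂' b₂) :=
        conjC_left _ a₂' b₂ (le_refl _) a₂ hsb₂ hlta hnc2
      exact conjC_right _ a₂' b₂' (le_refl _) b₂ hsa₂' hltb s1
    exact ⟨conj a₂' b₂', conj_wkF_build hsa' hsb' hnc' hnc2' hwa' hwb',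
      a₂, b₂, a₂', b₂', rfl, rfl, hlta, hltb⟩
  · intro hnc
    rw [ready_conj_stable hsa hsb, ready_conj_stable hsa' hsb',
      hra (not_fp_conj hnc).1, hrb (not_fp_conj hnc).2]

lemma ec_wkF_decomp {u v w : Proc Act} {a : Act}
    (hu : Stable u) (hv : Stable v) (h : wkF a (ec u v) w) :
    ¬ Fp (ec u v) ∧ (wkF a u w ∨ wkF a v w) := by
  obtain ⟨hFp, s, htr, hFs, hsw, hFw, hstw⟩ :=
    wkF_decomp_stable (stable_ec hu hv) h
  have hc := not_fp_ec hFp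
  cases htr with
  | ecL h₁ _ =>
      exact ⟨hFp, Or.inl ⟨u, s, Relation.ReflTransGen.refl, hc.1, hc.1, h₁,
        hFs, hsw, hFw, hstw⟩⟩
  | ecR _ h₂ =>
      exact ⟨hFp, Or.inr ⟨v, s, Relation.ReflTransGen.refl, hc.2, hc.2, h₂,
        hFs, hsw, hFw, hstw⟩⟩

lemma ec_wkF_build_l {u v w : Proc Act} {a : Act}
    (hFv : ¬ Fp v) (hv : Stable v) (h : wkF a u w) : wkF a (ec u v) w := by
  obtain ⟨r, s, p1, hFu, hFr, htr, hFs, p2, hFw, hst⟩ := h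
  have hFrv : ¬ Fp (ec r v) := fun hh => (fp_ec_iff.mp hh).elim hFr hFv
  refine ⟨ec r v, s, ?_, fun hh => (fp_ec_iff.mp hh).elim hFu hFv, hFrv,
    Trans.ecL htr (stable_iff.mp hv), hFs, p2, hFw, hst⟩
  exact upgrade_path (ec_lift (project_path p1) Relation.ReflTransGen.refl) hFrv

lemma ec_wkF_build_r {u v w : Proc Act} {a : Act}
    (hFu : ¬ Fp u) (hu : Stable u) (h : wkF a v w) : wkF a (ec u v) w := by
  obtain ⟨r, s, p1, hFv, hFr, htr, hFs, p2, hFw, hst⟩ := h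
  have hFrv : ¬ Fp (ec u r) := fun hh => (fp_ec_iff.mp hh).elim hFu hFr
  refine ⟨ec u r, s, ?_, fun hh => (fp_ec_iff.mp hh).elim hFu hFv, hFrv,
    Trans.ecR (stable_iff.mp hu) htr, hFs, p2, hFw, hst⟩
  exact upgrade_path (ec_lift Relation.ReflTransGen.refl (project_path p1)) hFrv

lemma rsLT_ec {u u' v v' : Proc Act} (h1 : rsLT u u') (h2 : rsLT v v') :
    rsLT (ec u v) (ec u' v') := by
  refine ⟨fun s t => rsLT s t ∨ ∃ a b a' b', s = ec a b ∧ t = ec a' b' ∧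
    rsLT a a' ∧ rsLT b b', ?_, Or.inr ⟨u, v, u', v', rfl, rfl, h1, h2⟩⟩
  rintro s t (hst | ⟨a, b, a', b', rfl, rfl, ha, hb⟩)
  · obtain ⟨hs1, hs2, hs3, hs4, hs5⟩ := rsLT_spec hst
    refine ⟨hs1, hs2, hs3, fun c w hw => ?_, hs5⟩
    obtain ⟨w', hw', hlt⟩ := hs4 c w hw
    exact ⟨w', hw', Or.inl hlt⟩
  · obtain ⟨hsa, hsa', hca, hta, hra⟩ := rsLT_spec ha
    obtain ⟨hsb, hsb', hcb, htb, hrb⟩ := rsLT_spec hb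
    have hCC : ¬ Fp (ec a b) → ¬ Fp (ec a' b') := by
      intro hnc
      have hc := not_fp_ec hnc
      exact fun hh => (fp_ec_iff.mp hh).elim (hca hc.1) (hcb hc.2)
    refine ⟨stable_ec hsa hsb, stable_ec hsa' hsb', hCC, ?_, ?_⟩
    · intro c w hw
      obtain ⟨hnc, hcase⟩ := ec_wkF_decomp hsa hsb hw
      have hc := not_fp_ec hnc
      cases hcase with
      | inl hwa =>
          obtain ⟨w', hw', hlt⟩ := hta c w hwa
          exact ⟨w', ec_wkF_build_l (hcb hc.2) hsb' hw', Or.inl hlt⟩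
      | inr hwb =>
          obtain ⟨w', hw', hlt⟩ := htb c w hwb
          exact ⟨w', ec_wkF_build_r (hca hc.1) hsa' hw', Or.inl hlt⟩
    · intro hnc
      have hc := not_fp_ec hnc
      rw [ready_ec_stable hsa hsb, ready_ec_stable hsa' hsb',
        hra hc.1, hrb hc.2]

lemma par_wkF_decomp {A : Set Act} {u v w : Proc Act} {c : Act}
    (hu : Stable u) (hv : Stable v) (h : wkF c (par A u v) w) :
    ¬ Fp (par A u v) ∧
      ((c ∉ A ∧ ∃ u₂, w = par A u₂ v ∧ wkF c u u₂) ∨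
       (c ∉ A ∧ ∃ v₂, w = par A u v₂ ∧ wkF c v v₂) ∨
       (c ∈ A ∧ ∃ u₂ v₂, w = par A u₂ v₂ ∧ wkF c u u₂ ∧ wkF c v v₂)) := by
  obtain ⟨hFp, s, htr, hFs, hsw, hFw, hstw⟩ :=
    wkF_decomp_stable (stable_par hu hv) h
  have hc := not_fp_par hFp
  cases htr with
  | @parL _ _ _ u₁ _ hA h₁ _ =>
      obtain ⟨u₂, v₂, rfl, p1, p2⟩ := par_pathF hsw A _ _ rfl
      have hv₂ : v₂ = v := stable_path_eq hv p2
      subst hv₂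
      have hFs' := not_fp_par hFs
      have hFw' := not_fp_par hFw
      have hst₂ : Stable u₂ := fun z hz => hstw _ (Trans.parTauL hz)
      exact ⟨hFp, Or.inl ⟨hA, u₂, rfl,
        u, u₁, Relation.ReflTransGen.refl, hc.1, hc.1, h₁, hFs'.1, p1,
          hFw'.1, hst₂⟩⟩
  | @parR _ _ _ _ v₁ hA _ h₂ =>
      obtain ⟨u₂, v₂, rfl, p1, p2⟩ := par_pathF hsw A _ _ rfl
      have hu₂ : u₂ = u := stable_path_eq hu p1
      subst hu₂
      have hFs' := not_fp_par hFs
      have hFw' := not_fp_par hFw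
      have hst₂ : Stable v₂ := fun z hz => hstw _ (Trans.parTauR hz)
      exact ⟨hFp, Or.inr (Or.inl ⟨hA, v₂, rfl,
        v, v₁, Relation.ReflTransGen.refl, hc.2, hc.2, h₂, hFs'.2, p2,
          hFw'.2, hst₂⟩)⟩
  | @parSync _ _ _ u₁ _ v₁ hA h₁ h₂ =>
      obtain ⟨u₂, v₂, rfl, p1, p2⟩ := par_pathF hsw A _ _ rfl
      have hFs' := not_fp_par hFs
      have hFw' := not_fp_par hFw
      have hstu₂ : Stable u₂ := fun z hz => hstw _ (Trans.parTauL hz)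
      have hstv₂ : Stable v₂ := fun z hz => hstw _ (Trans.parTauR hz)
      exact ⟨hFp, Or.inr (Or.inr ⟨hA, u₂, v₂, rfl,
        ⟨u, u₁, Relation.ReflTransGen.refl, hc.1, hc.1, h₁, hFs'.1, p1,
          hFw'.1, hstu₂⟩,
        ⟨v, v₁, Relation.ReflTransGen.refl, hc.2, hc.2, h₂, hFs'.2, p2,
          hFw'.2, hstv₂⟩⟩)⟩

lemma par_wkF_build_l {A : Set Act} {u v u₂ : Proc Act} {c : Act}
    (hFv : ¬ Fp v) (hv : Stable v) (hA : c ∉ A) (h : wkF c u u₂) :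
    wkF c (par A u v) (par A u₂ v) := by
  obtain ⟨r, s, p1, hFu, hFr, htr, hFs, p2, hFw, hst⟩ := h
  have hFrv : ¬ Fp (par A r v) := fun hh => (fp_par_iff.mp hh).elim hFr hFv
  have hFsv : ¬ Fp (par A s v) := fun hh => (fp_par_iff.mp hh).elim hFs hFv
  have hFwv : ¬ Fp (par A u₂ v) := fun hh => (fp_par_iff.mp hh).elim hFw hFv
  refine ⟨par A r v, par A s v, ?_,
    fun hh => (fp_par_iff.mp hh).elim hFu hFv, hFrv,
    Trans.parL hA htr (stable_iff.mp hv), hFsv, ?_, hFwv, stable_par hst hv⟩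
  · exact upgrade_path (par_lift (project_path p1) Relation.ReflTransGen.refl) hFrv
  · exact upgrade_path (par_lift (project_path p2) Relation.ReflTransGen.refl) hFwv

lemma par_wkF_build_r {A : Set Act} {u v v₂ : Proc Act} {c : Act}
    (hFu : ¬ Fp u) (hu : Stable u) (hA : c ∉ A) (h : wkF c v v₂) :
    wkF c (par A u v) (par A u v₂) := by
  obtain ⟨r, s, p1, hFv, hFr, htr, hFs, p2, hFw, hst⟩ := h
  have hFrv : ¬ Fp (par A u r) := fun hh => (fp_par_iff.mp hh).elim hFu hFr
  have hFsv : ¬ Fp (par A u s) := fun hh => (fp_par_iff.mp hh).elim hFu hFs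
  have hFwv : ¬ Fp (par A u v₂) := fun hh => (fp_par_iff.mp hh).elim hFu hFw
  refine ⟨par A u r, par A u s, ?_,
    fun hh => (fp_par_iff.mp hh).elim hFu hFv, hFrv,
    Trans.parR hA (stable_iff.mp hu) htr, hFsv, ?_, hFwv, stable_par hu hst⟩
  · exact upgrade_path (par_lift Relation.ReflTransGen.refl (project_path p1)) hFrv
  · exact upgrade_path (par_lift Relation.ReflTransGen.refl (project_path p2)) hFwv

lemma par_wkF_build_sync {A : Set Act} {u v u₂ v₂ : Proc Act} {c : Act}
    (hA : c ∈ A) (h1 : wkF c u u₂) (h2 : wkF c v v₂) :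
    wkF c (par A u v) (par A u₂ v₂) := by
  obtain ⟨r₁, s₁, p1, hFu, hFr₁, htr₁, hFs₁, q1, hFu₂, hst₁⟩ := h1
  obtain ⟨r₂, s₂, p2, hFv, hFr₂, htr₂, hFs₂, q2, hFv₂, hst₂⟩ := h2
  have hFr : ¬ Fp (par A r₁ r₂) := fun hh => (fp_par_iff.mp hh).elim hFr₁ hFr₂
  have hFs : ¬ Fp (par A s₁ s₂) := fun hh => (fp_par_iff.mp hh).elim hFs₁ hFs₂
  have hFw : ¬ Fp (par A u₂ v₂) := fun hh => (fp_par_iff.mp hh).elim hFu₂ hFv₂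
  refine ⟨par A r₁ r₂, par A s₁ s₂, ?_,
    fun hh => (fp_par_iff.mp hh).elim hFu hFv, hFr,
    Trans.parSync hA htr₁ htr₂, hFs, ?_, hFw, stable_par hst₁ hst₂⟩
  · exact upgrade_path (par_lift (project_path p1) (project_path p2)) hFr
  · exact upgrade_path (par_lift (project_path q1) (project_path q2)) hFw

lemma rsLT_par {A : Set Act} {u u' v v' : Proc Act}
    (h1 : rsLT u u') (h2 : rsLT v v') : rsLT (par A u v) (par A u' v') := by
  refine ⟨fun s t => ∃ a b a' b', s = par A a b ∧ t = par A a' b' ∧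
    rsLT a a' ∧ rsLT b b', ?_, u, v, u', v', rfl, rfl, h1, h2⟩
  rintro s t ⟨a, b, a', b', rfl, rfl, ha, hb⟩
  obtain ⟨hsa, hsa', hca, hta, hra⟩ := rsLT_spec ha
  obtain ⟨hsb, hsb', hcb, htb, hrb⟩ := rsLT_spec hb
  have hCC : ¬ Fp (par A a b) → ¬ Fp (par A a' b') := by
    intro hnc
    have hc := not_fp_par hnc
    exact fun hh => (fp_par_iff.mp hh).elim (hca hc.1) (hcb hc.2)
  refine ⟨stable_par hsa hsb, stable_par hsa' hsb', hCC, ?_, ?_⟩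
  · intro c w hw
    obtain ⟨hnc, hcase⟩ := par_wkF_decomp hsa hsb hw
    have hc := not_fp_par hnc
    rcases hcase with ⟨hA, u₂, rfl, hwa⟩ | ⟨hA, v₂, rfl, hwb⟩ |
      ⟨hA, u₂, v₂, rfl, hwa, hwb⟩
    · obtain ⟨w', hw', hlt⟩ := hta c u₂ hwa
      exact ⟨par A w' b', par_wkF_build_l (hcb hc.2) hsb' hA hw',
        u₂, b, w', b', rfl, rfl, hlt, hb⟩
    · obtain ⟨w', hw', hlt⟩ := htb c v₂ hwb
      exact ⟨par A a' w', par_wkF_build_r (hca hc.1) hsa' hA hw',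
        a, v₂, a', w', rfl, rfl, ha, hlt⟩
    · obtain ⟨w₁, hw₁, hlt₁⟩ := hta c u₂ hwa
      obtain ⟨w₂, hw₂, hlt₂⟩ := htb c v₂ hwb
      exact ⟨par A w₁ w₂, par_wkF_build_sync hA hw₁ hw₂,
        u₂, v₂, w₁, w₂, rfl, rfl, hlt₁, hlt₂⟩
  · intro hnc
    have hc := not_fp_par hnc
    exact ready_par_stable hsa hsb hsa' hsb' (hra hc.1) (hrb hc.2)

lemma ready_pre {α : ActT Act} {t : Proc Act} : ready (pre α t) = {α} := by
  ext β
  constructor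
  · rintro ⟨w, hw⟩; cases hw; rfl
  · rintro rfl; exact ⟨t, Trans.pre⟩

lemma rsLT_pre {a : Act} {x y : Proc Act} (h : rsLE x y) :
    rsLT (pre (ActT.act a) x) (pre (ActT.act a) y) := by
  refine ⟨fun s t => rsLT s t ∨ ∃ x' y', s = pre (ActT.act a) x' ∧
    t = pre (ActT.act a) y' ∧ rsLE x' y', ?_,
    Or.inr ⟨x, y, rfl, rfl, h⟩⟩
  rintro s t (hst | ⟨x', y', rfl, rfl, hxy⟩)
  · obtain ⟨hs1, hs2, hs3, hs4, hs5⟩ := rsLT_spec hst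
    refine ⟨hs1, hs2, hs3, fun c w hw => ?_, hs5⟩
    obtain ⟨w', hw', hlt⟩ := hs4 c w hw
    exact ⟨w', hw', Or.inl hlt⟩
  · refine ⟨stable_pre_act, stable_pre_act, ?_, ?_, ?_⟩
    · intro hF hF'
      exact rsLE_fp hxy (fun hh => hF (Fp.pre hh)) (fp_pre_iff.mp hF')
    · intro c w hw
      obtain ⟨hFp, s, htr, hFs, hsw, hFw, hstw⟩ :=
        wkF_decomp_stable stable_pre_act hw
      cases htr
      have hFx : ¬ Fp x' := fun hh => hFp (Fp.pre hh)
      have heps : epsF x' w := ⟨hsw, hFx, hFw, hstw⟩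
      obtain ⟨w', ⟨pq, hFy, hFw', hstw'⟩, hlt⟩ := hxy w heps
      exact ⟨w', wkF_build_stable (fun hh => hFy (fp_pre_iff.mp hh))
        Trans.pre (project_path pq) hFw' hstw', Or.inl hlt⟩
    · intro _; rw [ready_pre, ready_pre]

/-- ⊑_RS is a precongruence for all operators of CLL. -/
theorem stmt2 {Act : Type} {p q : Proc Act} (h : rsLE p q) :
    (∀ α : ActT Act, rsLE (pre α p) (pre α q)) ∧
    (∀ r : Proc Act, rsLE (ec p r) (ec q r)) ∧
    (∀ r : Proc Act, rsLE (ec r p) (ec r q)) ∧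
    (∀ r : Proc Act, rsLE (conj p r) (conj q r)) ∧
    (∀ r : Proc Act, rsLE (conj r p) (conj r q)) ∧
    (∀ r : Proc Act, rsLE (disj p r) (disj q r)) ∧
    (∀ r : Proc Act, rsLE (disj r p) (disj r q)) ∧
    (∀ (A : Set Act) (r : Proc Act), rsLE (par A p r) (par A q r)) ∧
    (∀ (A : Set Act) (r : Proc Act), rsLE (par A r p) (par A r q)) := by
  refine ⟨?_, ?_, ?_, ?_, ?_, ?_, ?_, ?_, ?_⟩
  · -- prefixing
    intro α
    cases α with
    | act a =>
        intro s hs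
        obtain ⟨path, hF1, hF2, hst⟩ := hs
        have hsp : s = pre (ActT.act a) p := stable_path_eq stable_pre_act path
        subst hsp
        have hFp : ¬ Fp p := fun hh => hF1 (Fp.pre hh)
        have hFq : ¬ Fp q := rsLE_fp h hFp
        exact ⟨pre (ActT.act a) q,
          ⟨Relation.ReflTransGen.refl, fun hh => hFq (fp_pre_iff.mp hh),
            fun hh => hFq (fp_pre_iff.mp hh), stable_pre_act⟩,
          rsLT_pre h⟩
    | tau =>
        intro s hs
        obtain ⟨path, hF1, hF2, hst⟩ := hs
        cases path.cases_head with
        | inl heq =>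
            subst heq
            exact absurd Trans.pre (hst p)
        | inr h' =>
            obtain ⟨c, ⟨htr, hF3, hF4⟩, rest⟩ := h'
            cases htr
            have heps : epsF p s := ⟨rest, hF4, hF2, hst⟩
            obtain ⟨q', ⟨pq, hFq, hFq', hstq'⟩, hlt⟩ := h s heps
            exact ⟨q', ⟨Relation.ReflTransGen.head
              ⟨Trans.pre, fun hh => hFq (fp_pre_iff.mp hh), hFq⟩ pq,
              fun hh => hFq (fp_pre_iff.mp hh), hFq', hstq'⟩, hlt⟩
  · -- ec left
    intro r s hs
    obtain ⟨path, hF1, hF2, hst⟩ := hs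
    obtain ⟨p₀, r₀, rfl, pp, pr⟩ := ec_pathF path p r rfl
    have hc1 := not_fp_ec hF1
    have hc2 := not_fp_ec hF2
    have hsp₀ : Stable p₀ := fun z hz => hst _ (Trans.ecTauL hz)
    have hsr₀ : Stable r₀ := fun z hz => hst _ (Trans.ecTauR hz)
    obtain ⟨q₀, ⟨pq, hFq, hFq₀, hsq₀⟩, hlt⟩ := h p₀ ⟨pp, hc1.1, hc2.1, hsp₀⟩
    have hnc' : ¬ Fp (ec q₀ r₀) := fun hh => (fp_ec_iff.mp hh).elim hFq₀ hc2.2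
    have hpl := ec_lift (project_path pq) (project_path pr)
    exact ⟨ec q₀ r₀, ⟨upgrade_path hpl hnc', not_fp_back hpl hnc', hnc',
      stable_ec hsq₀ hsr₀⟩, rsLT_ec hlt (rsLT_refl hsr₀)⟩
  · -- ec right
    intro r s hs
    obtain ⟨path, hF1, hF2, hst⟩ := hs
    obtain ⟨r₀, p₀, rfl, pr, pp⟩ := ec_pathF path r p rfl
    have hc1 := not_fp_ec hF1
    have hc2 := not_fp_ec hF2
    have hsr₀ : Stable r₀ := fun z hz => hst _ (Trans.ecTauL hz)
    have hsp₀ : Stable p₀ := fun z hz => hst _ (Trans.ecTauR hz)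
    obtain ⟨q₀, ⟨pq, hFq, hFq₀, hsq₀⟩, hlt⟩ := h p₀ ⟨pp, hc1.2, hc2.2, hsp₀⟩
    have hnc' : ¬ Fp (ec r₀ q₀) := fun hh => (fp_ec_iff.mp hh).elim hc2.1 hFq₀
    have hpl := ec_lift (project_path pr) (project_path pq)
    exact ⟨ec r₀ q₀, ⟨upgrade_path hpl hnc', not_fp_back hpl hnc', hnc',
      stable_ec hsr₀ hsq₀⟩, rsLT_ec (rsLT_refl hsr₀) hlt⟩
  · -- conj left
    intro r s hs
    obtain ⟨path, hF1, hF2, hst⟩ := hs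
    obtain ⟨p₀, r₀, rfl, pp, pr⟩ := conj_pathF path p r rfl
    have hc1 := not_fp_conj hF1
    have hc2 := not_fp_conj hF2
    have hsp₀ : Stable p₀ := fun z hz => hst _ (Trans.conjTauL hz)
    have hsr₀ : Stable r₀ := fun z hz => hst _ (Trans.conjTauR hz)
    obtain ⟨q₀, ⟨pq, hFq, hFq₀, hsq₀⟩, hlt⟩ := h p₀ ⟨pp, hc1.1, hc2.1, hsp₀⟩
    have hnc' : ¬ Fp (conj q₀ r₀) :=
      conjC_left _ q₀ r₀ (le_refl _) p₀ hsr₀ hlt hF2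
    have hpl := conj_lift (project_path pq) (project_path pr)
    exact ⟨conj q₀ r₀, ⟨upgrade_path hpl hnc', not_fp_back hpl hnc', hnc',
      stable_conj hsq₀ hsr₀⟩, rsLT_conj hlt (rsLT_refl hsr₀)⟩
  · -- conj right
    intro r s hs
    obtain ⟨path, hF1, hF2, hst⟩ := hs
    obtain ⟨r₀, p₀, rfl, pr, pp⟩ := conj_pathF path r p rfl
    have hc1 := not_fp_conj hF1
    have hc2 := not_fp_conj hF2
    have hsr₀ : Stable r₀ := fun z hz => hst _ (Trans.conjTauL hz)
    have hsp₀ : Stable p₀ := fun z hz => hst _ (Trans.conjTauR hz)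
    obtain ⟨q₀, ⟨pq, hFq, hFq₀, hsq₀⟩, hlt⟩ := h p₀ ⟨pp, hc1.2, hc2.2, hsp₀⟩
    have hnc' : ¬ Fp (conj r₀ q₀) :=
      conjC_right _ r₀ q₀ (le_refl _) p₀ hsr₀ hlt hF2
    have hpl := conj_lift (project_path pr) (project_path pq)
    exact ⟨conj r₀ q₀, ⟨upgrade_path hpl hnc', not_fp_back hpl hnc', hnc',
      stable_conj hsr₀ hsq₀⟩, rsLT_conj (rsLT_refl hsr₀) hlt⟩
  · -- disj left
    intro r s hs
    obtain ⟨path, hF1, hF2, hst⟩ := hs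
    cases path.cases_head with
    | inl heq =>
        subst heq
        exact absurd Trans.disjL (hst p)
    | inr h' =>
        obtain ⟨c, ⟨htr, hF3, hF4⟩, rest⟩ := h'
        cases htr with
        | disjL =>
            have heps : epsF p s := ⟨rest, hF4, hF2, hst⟩
            obtain ⟨q', ⟨pq, hFq, hFq', hstq'⟩, hlt⟩ := h s heps
            have hnd : ¬ Fp (disj q r) := fun hh => hFq (fp_disj_iff.mp hh).1
            exact ⟨q', ⟨Relation.ReflTransGen.head ⟨Trans.disjL, hnd, hFq⟩ pq,
              hnd, hFq', hstq'⟩, hlt⟩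
        | disjR =>
            have hnd : ¬ Fp (disj q r) := fun hh => hF4 (fp_disj_iff.mp hh).2
            exact ⟨s, ⟨Relation.ReflTransGen.head ⟨Trans.disjR, hnd, hF4⟩ rest,
              hnd, hF2, hst⟩, rsLT_refl hst⟩
  · -- disj right
    intro r s hs
    obtain ⟨path, hF1, hF2, hst⟩ := hs
    cases path.cases_head with
    | inl heq =>
        subst heq
        exact absurd Trans.disjL (hst r)
    | inr h' =>
        obtain ⟨c, ⟨htr, hF3, hF4⟩, rest⟩ := h'
        cases htr with
        | disjL =>
            have hnd : ¬ Fp (disj r q) := fun hh => hF4 (fp_disj_iff.mp hh).1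
            exact ⟨s, ⟨Relation.ReflTransGen.head ⟨Trans.disjL, hnd, hF4⟩ rest,
              hnd, hF2, hst⟩, rsLT_refl hst⟩
        | disjR =>
            have heps : epsF p s := ⟨rest, hF4, hF2, hst⟩
            obtain ⟨q', ⟨pq, hFq, hFq', hstq'⟩, hlt⟩ := h s heps
            have hnd : ¬ Fp (disj r q) := fun hh => hFq (fp_disj_iff.mp hh).2
            exact ⟨q', ⟨Relation.ReflTransGen.head ⟨Trans.disjR, hnd, hFq⟩ pq,
              hnd, hFq', hstq'⟩, hlt⟩
  · -- par left
    intro A r s hs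
    obtain ⟨path, hF1, hF2, hst⟩ := hs
    obtain ⟨p₀, r₀, rfl, pp, pr⟩ := par_pathF path A p r rfl
    have hc1 := not_fp_par hF1
    have hc2 := not_fp_par hF2
    have hsp₀ : Stable p₀ := fun z hz => hst _ (Trans.parTauL hz)
    have hsr₀ : Stable r₀ := fun z hz => hst _ (Trans.parTauR hz)
    obtain ⟨q₀, ⟨pq, hFq, hFq₀, hsq₀⟩, hlt⟩ := h p₀ ⟨pp, hc1.1, hc2.1, hsp₀⟩
    have hnc' : ¬ Fp (par A q₀ r₀) :=
      fun hh => (fp_par_iff.mp hh).elim hFq₀ hc2.2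
    have hpl := par_lift (A := A) (project_path pq) (project_path pr)
    exact ⟨par A q₀ r₀, ⟨upgrade_path hpl hnc', not_fp_back hpl hnc', hnc',
      stable_par hsq₀ hsr₀⟩, rsLT_par hlt (rsLT_refl hsr₀)⟩
  · -- par right
    intro A r s hs
    obtain ⟨path, hF1, hF2, hst⟩ := hs
    obtain ⟨r₀, p₀, rfl, pr, pp⟩ := par_pathF path A r p rfl
    have hc1 := not_fp_par hF1
    have hc2 := not_fp_par hF2
    have hsr₀ : Stable r₀ := fun z hz => hst _ (Trans.parTauL hz)
    have hsp₀ : Stable p₀ := fun z hz => hst _ (Trans.parTauR hz)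
    obtain ⟨q₀, ⟨pq, hFq, hFq₀, hsq₀⟩, hlt⟩ := h p₀ ⟨pp, hc1.2, hc2.2, hsp₀⟩
    have hnc' : ¬ Fp (par A r₀ q₀) :=
      fun hh => (fp_par_iff.mp hh).elim hc2.1 hFq₀
    have hpl := par_lift (A := A) (project_path pr) (project_path pq)
    exact ⟨par A r₀ q₀, ⟨upgrade_path hpl hnc', not_fp_back hpl hnc', hnc',
      stable_par hsr₀ hsq₀⟩, rsLT_par (rsLT_refl hsr₀) hlt⟩

end Proc
end

section
/- No basic process term is inconsistent: T(Σ_B) ∩ F = ∅, i.e., every process generated without ⊥ and without ∧ lies outside the inconsistency predicate F. -/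
open Classical

namespace Proc

theorem fp_not_basic {Act : Type} {p : Proc Act} (h : Fp p) : ¬ Basic p := by
  induction h with
  | bot => intro hb; cases hb
  | pre _ ih => intro hb; cases hb; exact ih ‹_›
  | disj _ _ ih1 _ => intro hb; cases hb; exact ih1 ‹_›
  | ecL _ ih => intro hb; cases hb; exact ih ‹_›
  | ecR _ ih => intro hb; cases hb; exact ih ‹_›
  | parL _ ih => intro hb; cases hb; exact ih ‹_›
  | parR _ ih => intro hb; cases hb; exact ih ‹_›
  | conjL _ _ => intro hb; cases hb
  | conjR _ _ => intro hb; cases hb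
  | conjReady _ _ => intro hb; cases hb
  | conjSucc _ _ _ => intro hb; cases hb
  | conjStable _ _ => intro hb; cases hb

/-- No basic process term is inconsistent: T(Σ_B) ∩ F = ∅. -/
theorem stmt3 {Act : Type} (p : Proc Act) (hp : Basic p) : ¬ Fp p :=
  fun h => fp_not_basic h hp

end Proc
end
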